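/- Let k ≥ 1 and s ≥ k+1. If a sequence T (with nonzero values in a field) satisfies the (k-1, s+1)-th equation T(i+k-1)·S̃^{k-1}_{s+2}(i) = T(i+s+1)·S̃^{k-1}_{s+2}(i+1) for all i with parameters H₁,...,H_{k-1}, and moreover H_k is chosen so that S̃^k_{s+1}(i₀) = 0 at some i₀, then S̃^k_{s+1}(i) = 0 for all i, and T satisfies the (k,s)-th equation T(i+k)·S̃^k_{s+1}(i) = T(i+s)·S̃^k_{s+1}(i+1) for all i. (Hence the solution space inclusion 𝒩^{k-1}_{s+1} ⊂ 𝒩^k_s.) -/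

import Mathlib

variable {R : Type*} [CommRing R]

/-- Discrete polynomials `T^r_s(i)` (case `h = n = 1`), with the convention
`T^0_s = 1` and `T^r_s = 0` for `s = 0`, `r ≥ 1`. -/
def Tp (T : ℤ → R) : ℕ → ℕ → ℤ → R
  | 0, _, _ => 1
  | _ + 1, 0, _ => 0
  | r + 1, s + 1, i => Tp T (r + 1) s (i + 1) + T i * Tp T r s (i + 2)

/-- Discrete polynomials `S^r_s(i)` (case `h = n = 1`). -/
def Sp (T : ℤ → R) : ℕ → ℕ → ℤ → R
  | 0, _, _ => 1
  | _ + 1, 0, _ => 0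
  | r + 1, 1, i => ∏ q ∈ Finset.range (r + 1), T (i + q)
  | r + 1, s + 2, i => Sp T (r + 1) (s + 1) (i + 1) + T (i + r) * Sp T r (s + 2) i
  termination_by r s _ => r + s

/-- Non-homogeneous polynomials `S̃^r_s(i) = Σ_{j=0}^r (-1)^j H_j S^{r-j}_{s-j}(i+j)`. -/
def Stil (T : ℤ → R) (H : ℕ → R) (r s : ℕ) (i : ℤ) : R :=
  ∑ j ∈ Finset.range (r + 1), (-1 : R) ^ j * H j * Sp T (r - j) (s - j) (i + j)

lemma spA (T : ℤ → R) (r s : ℕ) (i : ℤ) :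
    Sp T (r+1) (s+1) i = Sp T (r+1) s (i+1) + T (i + r) * Sp T r (s+1) i := by
  match r, s with
  | 0, 0 => simp [Sp]
  | r+1, 0 =>
    show Sp T (r+2) 1 i = Sp T (r+2) 0 (i+1) + T (i + (r+1:ℕ)) * Sp T (r+1) 1 i
    simp [Sp, Finset.prod_range_succ]
    ring
  | r, s+1 => rw [Sp]

lemma spB (T : ℤ → R) (r s : ℕ) (i : ℤ) :
    Sp T (r+1) (s+1) i = Sp T (r+1) s i + T (i + s) * Sp T r (s+1) (i+1) := by
  induction r generalizing s i with
  | zero =>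
    induction s generalizing i with
    | zero => simp [Sp]
    | succ t ih =>
      rw [spA T 0 (t+1) i, ih (i+1), spA T 0 t i]
      simp only [Sp]
      push_cast
      ring_nf
  | succ r ihr =>
    induction s generalizing i with
    | zero =>
      show Sp T (r+2) 1 i = Sp T (r+2) 0 i + T (i + (0:ℕ)) * Sp T (r+1) 1 (i+1)
      simp only [Sp, Finset.prod_range_succ']
      push_cast
      ring_nf
    | succ t ihs =>
      rw [spA T (r+1) (t+1) i, ihs (i+1), ihr (t+1) i,
        spA T (r+1) t i, spA T r (t+1) (i+1)]
      push_cast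
      ring_nf

lemma stilA (T : ℤ → R) (H : ℕ → R) (m s : ℕ) (hms : m ≤ s) (i : ℤ) :
    Stil T H (m+1) (s+2) i
      = Stil T H (m+1) (s+1) (i+1) + T (i + m) * Stil T H m (s+2) i := by
  have key : ∀ j ∈ Finset.range (m+1),
      (-1:R)^j * H j * Sp T (m+1-j) (s+2-j) (i+j)
      = (-1:R)^j * H j * Sp T (m+1-j) (s+1-j) ((i+1)+j)
        + T (i+↑m) * ((-1:R)^j * H j * Sp T (m-j) (s+2-j) (i+j)) := by
    intro j hj
    simp only [Finset.mem_range] at hj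
    have h1 : m+1-j = (m-j)+1 := by omega
    have h2 : s+2-j = (s+1-j)+1 := by omega
    have h3 : ((i+(j:ℤ)) + ((m-j : ℕ) : ℤ)) = i + m := by
      have : ((m-j : ℕ) : ℤ) = (m:ℤ) - j := by omega
      rw [this]; ring
    have h4 : (i+(j:ℤ))+1 = (i+1)+j := by ring
    rw [h1, h2, spA T (m-j) (s+1-j) (i+j), h3, h4]
    ring
  unfold Stil
  rw [Finset.sum_range_succ, Finset.sum_range_succ
    (f := fun j => (-1:R)^j * H j * Sp T (m+1-j) (s+1-j) ((i+1)+j)),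
    Finset.sum_congr rfl key, Finset.sum_add_distrib, ← Finset.mul_sum]
  simp only [Nat.sub_self]
  show _ + (-1:R)^(m+1) * H (m+1) * Sp T 0 (s+2-(m+1)) (i+(m+1:ℕ))
      = _ + (-1:R)^(m+1) * H (m+1) * Sp T 0 (s+1-(m+1)) ((i+1)+(m+1:ℕ)) + _
  simp only [Sp]
  ring

lemma stilB (T : ℤ → R) (H : ℕ → R) (m s : ℕ) (hms : m ≤ s) (i : ℤ) :
    Stil T H (m+1) (s+2) i
      = Stil T H (m+1) (s+1) i + T (i + (s:ℤ) + 1) * Stil T H m (s+2) (i+1) := by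
  have key : ∀ j ∈ Finset.range (m+1),
      (-1:R)^j * H j * Sp T (m+1-j) (s+2-j) (i+j)
      = (-1:R)^j * H j * Sp T (m+1-j) (s+1-j) (i+j)
        + T (i+(s:ℤ)+1) * ((-1:R)^j * H j * Sp T (m-j) (s+2-j) ((i+1)+j)) := by
    intro j hj
    simp only [Finset.mem_range] at hj
    have h1 : m+1-j = (m-j)+1 := by omega
    have h2 : s+2-j = (s+1-j)+1 := by omega
    have h3 : ((i+(j:ℤ)) + ((s+1-j : ℕ) : ℤ)) = i + (s:ℤ) + 1 := by
      have : ((s+1-j : ℕ) : ℤ) = (s:ℤ) + 1 - j := by omega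
      rw [this]; ring
    have h4 : (i+(j:ℤ))+1 = (i+1)+j := by ring
    rw [h1, h2, spB T (m-j) (s+1-j) (i+j), h3, h4]
    ring
  unfold Stil
  rw [Finset.sum_range_succ, Finset.sum_range_succ
    (f := fun j => (-1:R)^j * H j * Sp T (m+1-j) (s+1-j) (i+j)),
    Finset.sum_congr rfl key, Finset.sum_add_distrib, ← Finset.mul_sum]
  simp only [Nat.sub_self]
  show _ + (-1:R)^(m+1) * H (m+1) * Sp T 0 (s+2-(m+1)) (i+(m+1:ℕ))
      = _ + (-1:R)^(m+1) * H (m+1) * Sp T 0 (s+1-(m+1)) (i+(m+1:ℕ)) + _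
  simp only [Sp]
  ring

/-- Inclusion of solution spaces `𝒩^{k-1}_{s+1} ⊂ 𝒩^k_s`: if `T` satisfies the
`(k-1,s+1)`-th equation and `S̃^k_{s+1}` vanishes at one point, then `S̃^k_{s+1}`
vanishes identically and `T` satisfies the `(k,s)`-th equation. -/
theorem solution_space_inclusion {K : Type*} [Field K] (T : ℤ → K) (hT : ∀ i, T i ≠ 0)
    (k s : ℕ) (hk : 1 ≤ k) (hs : k + 1 ≤ s) (H : ℕ → K) (hH0 : H 0 = 1)
    (heq : ∀ i : ℤ, T (i + (k : ℤ) - 1) * Stil T H (k - 1) (s + 2) i =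
      T (i + (s : ℤ) + 1) * Stil T H (k - 1) (s + 2) (i + 1))
    (i₀ : ℤ) (h0 : Stil T H k (s + 1) i₀ = 0) :
    (∀ i : ℤ, Stil T H k (s + 1) i = 0) ∧
      (∀ i : ℤ, T (i + (k : ℤ)) * Stil T H k (s + 1) i =
        T (i + (s : ℤ)) * Stil T H k (s + 1) (i + 1)) := by
  obtain ⟨m, rfl⟩ : ∃ m, k = m + 1 := ⟨k - 1, by omega⟩
  simp only [Nat.add_sub_cancel] at heq
  have step : ∀ i : ℤ, Stil T H (m+1) (s+1) (i+1) = Stil T H (m+1) (s+1) i := by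
    intro i
    have hA := stilA T H m s (by omega) i
    have hB := stilB T H m s (by omega) i
    have he := heq i
    rw [show (i + ((m+1:ℕ):ℤ) - 1) = i + (m:ℤ) by push_cast; ring] at he
    linear_combination hB - hA - he
  have zero : ∀ i : ℤ, Stil T H (m+1) (s+1) i = 0 := by
    have key : ∀ d : ℤ, Stil T H (m+1) (s+1) (i₀ + d) = 0 := by
      intro d
      induction d using Int.induction_on with
      | zero => simpa using h0
      | succ n ih => rw [show i₀ + ((n:ℤ)+1) = (i₀ + n) + 1 by ring, step]; exact ih
      | pred n ih =>
        have h := step (i₀ + (-(n:ℤ)-1))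
        rw [show i₀ + (-(n:ℤ)-1) + 1 = i₀ + -(n:ℤ) by ring] at h
        rw [← h]
        exact ih
    intro i
    have := key (i - i₀)
    rwa [show i₀ + (i - i₀) = i by ring] at this
  refine ⟨zero, fun i => ?_⟩
  rw [zero i, zero (i+1), mul_zero, mul_zero]
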